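/- Let (X, d) be a metric space, μ a measure on X with μ(X) < ∞, and let M, K > 0, r₁ ∈ (0,1]. Suppose w : X → ℝ is measurable with 0 ≤ w ≤ M μ-a.e. and ∫_{B_r(x)} w dμ ≥ M^{-1} exp(-2K r^{-K}) for every x ∈ X and every r ∈ (0, r₁). Let E > 0, α ∈ (0,1], and f : X → ℝ satisfy |f(x) - f(y)| ≤ E d(x,y)^α for all x, y ∈ X. If ∫_X |f| w dμ ≤ ε with 0 < ε < E, and if there exists ξ ∈ X with |f(ξ)| = sup_X |f|, then sup_X |f| ≤ M exp(2K r^{-K}) ε + E r^α for every r ∈ (0, r₁). -/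

import Mathlib

open MeasureTheory

/-- Core inequality of the weighted interpolation (Proposition 7.1). -/
theorem stmt3 {X : Type*} [MetricSpace X] [MeasurableSpace X] [OpensMeasurableSpace X]
    (μ : Measure X) [IsFiniteMeasure μ]
    (M K r₁ E α ε : ℝ) (hM : 0 < M) (hK : 0 < K) (hr₁ : 0 < r₁ ∧ r₁ ≤ 1)
    (hα : 0 < α ∧ α ≤ 1) (hE : 0 < E) (hε : 0 < ε ∧ ε < E)
    (w : X → ℝ) (hw : Measurable w)
    (hwb : ∀ᵐ x ∂μ, 0 ≤ w x ∧ w x ≤ M)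
    (hwlow : ∀ x : X, ∀ r ∈ Set.Ioo (0 : ℝ) r₁,
      M⁻¹ * Real.exp (-2 * K * r ^ (-K)) ≤ ∫ y in Metric.ball x r, w y ∂μ)
    (f : X → ℝ) (hf : ∀ x y : X, |f x - f y| ≤ E * dist x y ^ α)
    (hint : ∫ x, |f x| * w x ∂μ ≤ ε)
    (ξ : X) (hξ : |f ξ| = ⨆ x, |f x|) :
    ∀ r ∈ Set.Ioo (0 : ℝ) r₁,
      (⨆ x, |f x|) ≤ M * Real.exp (2 * K * r ^ (-K)) * ε + E * r ^ α := by
  intro r hr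
  obtain ⟨hr0, hrr₁⟩ := hr
  have hrα : (0:ℝ) < r ^ α := Real.rpow_pos_of_pos hr0 α
  have hexp : (0:ℝ) < Real.exp (2 * K * r ^ (-K)) := Real.exp_pos _
  by_cases hbdd : BddAbove (Set.range fun x => |f x|)
  swap
  · rw [Real.iSup_of_not_bddAbove hbdd]
    have : 0 < M * Real.exp (2 * K * r ^ (-K)) * ε + E * r ^ α := by
      have := hε.1
      positivity
    linarith
  rw [← hξ]
  have hle : ∀ x, |f x| ≤ |f ξ| := by
    intro x
    rw [hξ]
    exact le_ciSup hbdd x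
  have hSnn : 0 ≤ |f ξ| := abs_nonneg _
  -- continuity of f
  have hcont : Continuous f := by
    rw [Metric.continuous_iff]
    intro x δ hδ
    refine ⟨(δ / (2 * E)) ^ (1 / α), Real.rpow_pos_of_pos (by positivity) _, fun y hy => ?_⟩
    have hd : dist y x ^ α < ((δ / (2 * E)) ^ (1 / α)) ^ α :=
      Real.rpow_lt_rpow dist_nonneg hy hα.1
    have heq : ((δ / (2 * E)) ^ (1 / α)) ^ α = δ / (2 * E) := by
      rw [← Real.rpow_mul (by positivity), one_div, inv_mul_cancel₀ hα.1.ne', Real.rpow_one]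
    rw [heq] at hd
    calc dist (f y) (f x) = |f y - f x| := Real.dist_eq _ _
      _ ≤ E * dist y x ^ α := hf y x
      _ < E * (δ / (2 * E)) := by exact (mul_lt_mul_iff_right₀ hE).mpr hd
      _ < δ := by
          have hEq : E * (δ / (2 * E)) = δ / 2 := by field_simp
          rw [hEq]; linarith
  have hfmeas : Measurable f := hcont.measurable
  have hgint : Integrable (fun x => |f x| * w x) μ := by
    refine Integrable.mono' (integrable_const (|f ξ| * M))
      ((hfmeas.abs.mul hw).aestronglyMeasurable) ?_
    filter_upwards [hwb] with x hx
    rw [Real.norm_eq_abs, abs_of_nonneg (mul_nonneg (abs_nonneg _) hx.1)]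
    exact mul_le_mul (hle x) hx.2 hx.1 hSnn
  have hwint : Integrable w (μ.restrict (Metric.ball ξ r)) := by
    refine Integrable.mono' (integrable_const M) hw.aestronglyMeasurable ?_
    filter_upwards [ae_restrict_of_ae hwb] with x hx
    rw [Real.norm_eq_abs, abs_of_nonneg hx.1]; exact hx.2
  have key : (|f ξ| - E * r ^ α) * ∫ y in Metric.ball ξ r, w y ∂μ
      ≤ ∫ y in Metric.ball ξ r, |f y| * w y ∂μ := by
    rw [← integral_const_mul]
    refine integral_mono_ae (hwint.const_mul _) hgint.restrict ?_
    filter_upwards [ae_restrict_of_ae hwb, ae_restrict_mem measurableSet_ball] with y hy hmem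
    have hd : dist ξ y ^ α ≤ r ^ α := by
      refine Real.rpow_le_rpow dist_nonneg ?_ hα.1.le
      rw [dist_comm]
      exact (Metric.mem_ball.mp hmem).le
    have h2 : |f ξ| - |f y| ≤ E * dist ξ y ^ α :=
      (abs_sub_abs_le_abs_sub _ _).trans (hf ξ y)
    have h3 : E * dist ξ y ^ α ≤ E * r ^ α := mul_le_mul_of_nonneg_left hd hE.le
    have h1 : |f ξ| - E * r ^ α ≤ |f y| := by linarith
    exact mul_le_mul_of_nonneg_right h1 hy.1
  have h2 : ∫ y in Metric.ball ξ r, |f y| * w y ∂μ ≤ ε := by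
    refine le_trans ?_ hint
    refine setIntegral_le_integral hgint ?_
    filter_upwards [hwb] with x hx
    exact mul_nonneg (abs_nonneg _) hx.1
  set A := ∫ y in Metric.ball ξ r, w y ∂μ with hA
  have hAlow : M⁻¹ * Real.exp (-2 * K * r ^ (-K)) ≤ A := hwlow ξ r ⟨hr0, hrr₁⟩
  have hBpos : (0:ℝ) < M⁻¹ * Real.exp (-2 * K * r ^ (-K)) := by positivity
  have hApos : 0 < A := hBpos.trans_le hAlow
  have h3 : |f ξ| - E * r ^ α ≤ ε / A := (le_div_iff₀ hApos).mpr (key.trans h2)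
  have h4 : ε / A ≤ ε / (M⁻¹ * Real.exp (-2 * K * r ^ (-K))) := by
    gcongr
    exact hε.1.le
  have h5 : ε / (M⁻¹ * Real.exp (-2 * K * r ^ (-K))) = M * Real.exp (2 * K * r ^ (-K)) * ε := by
    rw [show -2 * K * r ^ (-K) = -(2 * K * r ^ (-K)) by ring, Real.exp_neg]
    field_simp
  rw [h5] at h4
  linarith
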